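/- A normal mode transformation exists if and only if Ω is positive definite. That is, Ω is positive definite if and only if there are a 2N×2N complex matrix T and positive real numbers μ₁, …, μ_N with Tᴴ R T = Σ, T = Γ T̄ Γ, and T⁻¹ D T = diag(μ₁, …, μ_N, −μ₁, …, −μ_N). -/

import Mathlib

open Matrix ComplexOrder Polynomial

private lemma posdef_conj_aux {n : Type*} [Fintype n] [DecidableEq n]
    {A : Matrix n n ℂ} (hA : A.PosDef) (B : Matrix n n ℂ) (hB : IsUnit B.det) :
    (Bᴴ * A * B).PosDef := by
  have hBu : IsUnit B := (Matrix.isUnit_iff_isUnit_det B).2 hB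
  exact hA.conjTranspose_mul_mul_same (Matrix.mulVec_injective_iff_isUnit.mpr hBu)

private lemma charpoly_conj_aux {n : Type*} [Fintype n] [DecidableEq n]
    (P A Q : Matrix n n ℂ) (h : P * Q = 1) :
    (P * A * Q).charpoly = A.charpoly := by
  have hPQ : P.map (C : ℂ →+* ℂ[X]) * Q.map (C : ℂ →+* ℂ[X]) = 1 := by
    rw [← Matrix.map_mul, h, Matrix.map_one] <;> simp
  have hchar : charmatrix (P * A * Q) = P.map C * charmatrix A * Q.map C := by
    rw [charmatrix, charmatrix, mul_sub, sub_mul]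
    congr 1
    · rw [← (scalar_commute (X : ℂ[X]) (Commute.all _) (P.map C)).eq, Matrix.mul_assoc,
        scalar_apply, ← smul_eq_diagonal_mul, hPQ, smul_eq_diagonal_mul, Matrix.mul_one]
    · simp only [RingHom.mapMatrix_apply, Matrix.map_mul]
  rw [Matrix.charpoly, Matrix.charpoly, hchar, det_mul, det_mul]
  have hd : (P.map (C : ℂ →+* ℂ[X])).det * (Q.map (C : ℂ →+* ℂ[X])).det = 1 := by
    rw [← det_mul, hPQ, det_one]
  calc (P.map (C : ℂ →+* ℂ[X])).det * (charmatrix A).det * (Q.map (C : ℂ →+* ℂ[X])).det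
      = ((P.map (C : ℂ →+* ℂ[X])).det * (Q.map (C : ℂ →+* ℂ[X])).det) * (charmatrix A).det := by
        ring
    _ = (charmatrix A).det := by rw [hd, one_mul]

private lemma charpoly_diagonal_aux {n : Type*} [Fintype n] [DecidableEq n] (v : n → ℂ) :
    (Matrix.diagonal v).charpoly
      = (Finset.univ.val.map (fun i => (X : ℂ[X]) - C (v i))).prod := by
  have hc : charmatrix (Matrix.diagonal v) = Matrix.diagonal (fun i => (X : ℂ[X]) - C (v i)) := by
    ext i j
    by_cases hij : i = j
    · subst hij; simp [charmatrix_apply_eq]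
    · simp [charmatrix_apply_ne _ _ _ hij, Matrix.diagonal_apply_ne _ hij]
  rw [Matrix.charpoly, hc, det_diagonal, Finset.prod_eq_multiset_prod]

private lemma multiset_eq_aux {n : Type*} [Fintype n] [DecidableEq n] (v w : n → ℂ)
    (h : (Matrix.diagonal v).charpoly = (Matrix.diagonal w).charpoly) :
    Finset.univ.val.map v = Finset.univ.val.map w := by
  rw [charpoly_diagonal_aux, charpoly_diagonal_aux] at h
  have hv : Finset.univ.val.map (fun i => (X : ℂ[X]) - C (v i))
      = (Finset.univ.val.map v).map (fun a => (X : ℂ[X]) - C a) := by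
    rw [Multiset.map_map]; rfl
  have hw : Finset.univ.val.map (fun i => (X : ℂ[X]) - C (w i))
      = (Finset.univ.val.map w).map (fun a => (X : ℂ[X]) - C a) := by
    rw [Multiset.map_map]; rfl
  rw [hv, hw] at h
  calc Finset.univ.val.map v
      = ((Finset.univ.val.map v).map (fun a => (X : ℂ[X]) - C a)).prod.roots :=
        (roots_multiset_prod_X_sub_C _).symm
    _ = ((Finset.univ.val.map w).map (fun a => (X : ℂ[X]) - C a)).prod.roots := by rw [h]
    _ = Finset.univ.val.map w := roots_multiset_prod_X_sub_C _

set_option maxHeartbeats 1600000 in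
/-- a normal mode transformation exists if and only if `Ω` is positive
definite. -/
theorem stmt_13 {N : ℕ} (hN : 0 < N)
    (R Ω : Matrix (Fin N ⊕ Fin N) (Fin N ⊕ Fin N) ℂ)
    (hR : R.IsHermitian) (hΩ : Ω.IsHermitian)
    (Γ Sig : Matrix (Fin N ⊕ Fin N) (Fin N ⊕ Fin N) ℂ)
    (hΓ : Γ = Matrix.fromBlocks 0 1 1 0)
    (hSig : Sig = Matrix.fromBlocks 1 0 0 (-1))
    (hRconj : Γ * R.map (starRingEnd ℂ) * Γ = -R)
    (hΩconj : Γ * Ω.map (starRingEnd ℂ) * Γ = Ω)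
    (hRunit : IsUnit R.det)
    (D : Matrix (Fin N ⊕ Fin N) (Fin N ⊕ Fin N) ℂ) (hD : D = R⁻¹ * Ω) :
    Ω.PosDef ↔
      ∃ (T : Matrix (Fin N ⊕ Fin N) (Fin N ⊕ Fin N) ℂ) (μ : Fin N → ℝ),
        (∀ i, 0 < μ i) ∧
        Tᴴ * R * T = Sig ∧
        T = Γ * T.map (starRingEnd ℂ) * Γ ∧
        T⁻¹ * D * T
          = Matrix.diagonal (Sum.elim (fun i => (μ i : ℂ)) fun i => -(μ i : ℂ)) := by
  constructor
  · intro hpd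
    classical
    -- Γ basics
    have hΓe : ∀ a b, Γ a b = if Sum.swap a = b then 1 else 0 := by
      intro a b
      rw [hΓ]
      rcases a with i|i <;> rcases b with j|j <;>
        simp [Matrix.one_apply, eq_comm]
    have hGl : ∀ (X : Matrix (Fin N ⊕ Fin N) (Fin N ⊕ Fin N) ℂ) a b,
        (Γ * X) a b = X (Sum.swap a) b := by
      intro X a b
      rw [Matrix.mul_apply]
      rw [Fintype.sum_congr _ _ (fun c => by rw [hΓe])]
      simp [ite_mul, Finset.sum_ite_eq]
    have hGr : ∀ (X : Matrix (Fin N ⊕ Fin N) (Fin N ⊕ Fin N) ℂ) a b,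
        (X * Γ) a b = X a (Sum.swap b) := by
      intro X a b
      rw [Matrix.mul_apply]
      rw [Fintype.sum_congr _ _ (fun c => by rw [hΓe c b])]
      have : ∀ c, (if Sum.swap c = b then X a c * 1 else X a c * 0)
          = if c = Sum.swap b then X a c else 0 := by
        intro c
        by_cases h : c = Sum.swap b
        · subst h; simp
        · have h2 : ¬ Sum.swap c = b := fun hc => h (by rw [← hc, Sum.swap_swap])
          simp [h, h2]
      rw [Fintype.sum_congr _ _ (fun c => by rw [mul_ite, this])]
      simp [Finset.sum_ite_eq']
    have hΓΓ : Γ * Γ = 1 := by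
      ext a b
      rw [hGl, hΓe, Matrix.one_apply, Sum.swap_swap]
    have hsand : ∀ X Y : Matrix (Fin N ⊕ Fin N) (Fin N ⊕ Fin N) ℂ,
        (Γ * X * Γ) * (Γ * Y * Γ) = Γ * (X * Y) * Γ := by
      intro X Y
      rw [show (Γ * X * Γ) * (Γ * Y * Γ) = Γ * X * (Γ * Γ) * Y * Γ by noncomm_ring,
        hΓΓ, Matrix.mul_one]
      noncomm_ring
    have hΓH : Γᴴ = Γ := by
      ext a b
      rw [Matrix.conjTranspose_apply, hΓe, hΓe]
      by_cases h : Sum.swap a = b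
      · have h2 : Sum.swap b = a := by rw [← h, Sum.swap_swap]
        simp [h, h2]
      · have h2 : ¬ Sum.swap b = a := fun hc => h (by rw [← hc, Sum.swap_swap])
        simp [h, h2]
    -- square root of Ω
    have hΩpsd := hpd.posSemidef
    have hΩdet : IsUnit Ω.det := hpd.det_pos.ne'.isUnit
    open scoped MatrixOrder in
    obtain ⟨W, hWpsd, hWW, hCW⟩ : ∃ W : Matrix (Fin N ⊕ Fin N) (Fin N ⊕ Fin N) ℂ,
        W.PosSemidef ∧ W * W = Ω ∧ Γ * W.map (starRingEnd ℂ) * Γ = W := by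
      refine ⟨CFC.sqrt Ω, (CFC.sqrt_nonneg Ω).posSemidef, CFC.sqrt_mul_sqrt_self Ω hΩpsd.nonneg, ?_⟩
      have hWH : (CFC.sqrt Ω)ᴴ = CFC.sqrt Ω := (CFC.sqrt_nonneg Ω).posSemidef.1
      have hWT : (CFC.sqrt Ω).map (starRingEnd ℂ) = (CFC.sqrt Ω)ᵀ := by
        ext a b
        rw [Matrix.map_apply, Matrix.transpose_apply]
        have := congrFun (congrFun hWH b) a
        rw [Matrix.conjTranspose_apply] at this
        exact this
      have hpsd : (Γ * (CFC.sqrt Ω).map (starRingEnd ℂ) * Γ).PosSemidef := by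
        rw [hWT]
        have := ((CFC.sqrt_nonneg Ω).posSemidef.transpose).conjTranspose_mul_mul_same Γ
        rwa [hΓH] at this
      have hsq : (Γ * (CFC.sqrt Ω).map (starRingEnd ℂ) * Γ) ^ 2 = Ω := by
        rw [pow_two, hsand, ← Matrix.map_mul, CFC.sqrt_mul_sqrt_self Ω hΩpsd.nonneg, hΩconj]
      exact (CFC.sqrt_unique (by rw [← pow_two]; exact hsq) hpsd.nonneg).symm
    have hWH : Wᴴ = W := hWpsd.1
    have hWdet : IsUnit W.det := by
      have h : W.det * W.det = Ω.det := by rw [← det_mul, hWW]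
      exact isUnit_of_mul_isUnit_left (h.symm ▸ hΩdet)
    have hWi1 : W * W⁻¹ = 1 := mul_nonsing_inv W hWdet
    have hWi2 : W⁻¹ * W = 1 := nonsing_inv_mul W hWdet
    have hWiH : (W⁻¹)ᴴ = W⁻¹ := by rw [conjTranspose_nonsing_inv, hWH]
    have hRi1 : R * R⁻¹ = 1 := mul_nonsing_inv R hRunit
    have hRi2 : R⁻¹ * R = 1 := nonsing_inv_mul R hRunit
    have hRiH : (R⁻¹)ᴴ = R⁻¹ := by rw [conjTranspose_nonsing_inv, hR.eq]
    have hone : Γ * (1 : Matrix (Fin N ⊕ Fin N) (Fin N ⊕ Fin N) ℂ).map (starRingEnd ℂ) * Γ = 1 := by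
      have : (1 : Matrix (Fin N ⊕ Fin N) (Fin N ⊕ Fin N) ℂ).map (starRingEnd ℂ) = 1 := by simp
      rw [this, Matrix.mul_one, hΓΓ]
    have hCWi : Γ * (W⁻¹).map (starRingEnd ℂ) * Γ = W⁻¹ := by
      have h1 : (Γ * W.map (starRingEnd ℂ) * Γ) * (Γ * (W⁻¹).map (starRingEnd ℂ) * Γ) = 1 := by
        rw [hsand, ← Matrix.map_mul, hWi1, hone]
      rw [hCW] at h1
      exact (Matrix.inv_eq_right_inv h1).symm
    have hCRi : Γ * (R⁻¹).map (starRingEnd ℂ) * Γ = -R⁻¹ := by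
      have h1 : (Γ * R.map (starRingEnd ℂ) * Γ) * (Γ * (R⁻¹).map (starRingEnd ℂ) * Γ) = 1 := by
        rw [hsand, ← Matrix.map_mul, hRi1, hone]
      rw [hRconj] at h1
      have h2 : R * (-(Γ * (R⁻¹).map (starRingEnd ℂ) * Γ)) = 1 := by
        rw [Matrix.mul_neg, ← Matrix.neg_mul, h1]
      have h3 := Matrix.inv_eq_right_inv h2
      rw [← neg_eq_iff_eq_neg] at h3
      exact h3.symm
    -- the matrix M
    set M : Matrix (Fin N ⊕ Fin N) (Fin N ⊕ Fin N) ℂ := W * R⁻¹ * W with hMdef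
    have hMH : M.IsHermitian := by
      show Mᴴ = M
      rw [hMdef]
      rw [Matrix.conjTranspose_mul, Matrix.conjTranspose_mul, hWH, hRiH]
      noncomm_ring
    have hRidet : IsUnit (R⁻¹).det := R.isUnit_nonsing_inv_det hRunit
    have hMdet : IsUnit M.det := by
      rw [hMdef, det_mul, det_mul]
      exact (hWdet.mul hRidet).mul hWdet
    have hCM : Γ * M.map (starRingEnd ℂ) * Γ = -M := by
      calc Γ * M.map (starRingEnd ℂ) * Γ
          = (Γ * W.map (starRingEnd ℂ) * Γ) * (Γ * (R⁻¹).map (starRingEnd ℂ) * Γ)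
            * (Γ * W.map (starRingEnd ℂ) * Γ) := by
            rw [hsand, hsand, ← Matrix.map_mul, ← Matrix.map_mul]
        _ = W * (-R⁻¹) * W := by rw [hCW, hCRi]
        _ = -M := by rw [hMdef]; noncomm_ring
    have hMc : ∀ a b, M a b = -(starRingEnd ℂ) (M (Sum.swap a) (Sum.swap b)) := by
      intro a b
      have h : (Γ * M.map (starRingEnd ℂ) * Γ) a b = (-M) a b := by rw [hCM]
      rw [hGr, hGl, Matrix.map_apply, Matrix.neg_apply] at h
      rw [h, neg_neg]
    -- spectral theorem
    set E : Matrix (Fin N ⊕ Fin N) (Fin N ⊕ Fin N) ℂ := (hMH.eigenvectorUnitary : Matrix (Fin N ⊕ Fin N) (Fin N ⊕ Fin N) ℂ) with hEdef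
    set lam : (Fin N ⊕ Fin N) → ℝ := hMH.eigenvalues with hlamdef
    have hE1 : Eᴴ * E = 1 := by
      have := Matrix.mem_unitaryGroup_iff'.mp hMH.eigenvectorUnitary.2
      rwa [Matrix.star_eq_conjTranspose] at this
    have hE2 : E * Eᴴ = 1 := mul_eq_one_comm.mp hE1
    have hME : M * E = E * Matrix.diagonal (fun i => (lam i : ℂ)) := by
      have hs := hMH.spectral_theorem
      rw [Unitary.conjStarAlgAut_apply, Matrix.star_eq_conjTranspose] at hs
      calc M * E = E * Matrix.diagonal (RCLike.ofReal ∘ lam) * (Eᴴ * E) := by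
            rw [← Matrix.mul_assoc, ← hs]
        _ = E * Matrix.diagonal (fun i => (lam i : ℂ)) := by
            rw [hE1, Matrix.mul_one]; rfl
    have hlamne : ∀ i, lam i ≠ 0 := by
      intro i hzero
      have hdet := hMH.det_eq_prod_eigenvalues
      have hprodne : M.det ≠ 0 := hMdet.ne_zero
      rw [hdet, Finset.prod_ne_zero_iff] at hprodne
      apply hprodne i (Finset.mem_univ i)
      rw [← hlamdef, hzero]
      simp
    -- the reflected diagonalization
    set F : Matrix (Fin N ⊕ Fin N) (Fin N ⊕ Fin N) ℂ := Γ * E.map (starRingEnd ℂ) with hFdef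
    have hEcH : (E.map (starRingEnd ℂ))ᴴ = Eᵀ := by
      ext a b
      simp [Matrix.conjTranspose_apply, Matrix.map_apply, Matrix.transpose_apply]
    have hF1 : Fᴴ * F = 1 := by
      rw [hFdef, Matrix.conjTranspose_mul, hEcH, hΓH]
      calc Eᵀ * Γ * (Γ * E.map (starRingEnd ℂ))
          = Eᵀ * (Γ * Γ) * E.map (starRingEnd ℂ) := by noncomm_ring
        _ = Eᵀ * E.map (starRingEnd ℂ) := by rw [hΓΓ, Matrix.mul_one]
        _ = (Eᴴ * E).map (starRingEnd ℂ) := by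
            rw [Matrix.map_mul]
            congr 1
            ext a b
            simp [Matrix.conjTranspose_apply, Matrix.map_apply, Matrix.transpose_apply]
        _ = 1 := by rw [hE1]; simp
    have hF2 : F * Fᴴ = 1 := mul_eq_one_comm.mp hF1
    have hMG : M * Γ = -(Γ * M.map (starRingEnd ℂ)) := by
      have h := congrArg (· * Γ) hCM
      rw [Matrix.mul_assoc, hΓΓ, Matrix.mul_one] at h
      rw [h]
      noncomm_ring
    have hMF : M * F = F * Matrix.diagonal (fun i => -(lam i : ℂ)) := by
      calc M * F = (M * Γ) * E.map (starRingEnd ℂ) := by rw [hFdef]; noncomm_ring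
        _ = -(Γ * (M.map (starRingEnd ℂ) * E.map (starRingEnd ℂ))) := by
            rw [hMG]; noncomm_ring
        _ = -(Γ * ((M * E).map (starRingEnd ℂ))) := by rw [← Matrix.map_mul]
        _ = -(Γ * (E.map (starRingEnd ℂ) * (Matrix.diagonal (fun i => (lam i : ℂ))).map (starRingEnd ℂ))) := by
            rw [hME, Matrix.map_mul]
        _ = F * Matrix.diagonal (fun i => -(lam i : ℂ)) := by
            have hdmap : (Matrix.diagonal (fun i => (lam i : ℂ))).map (starRingEnd ℂ)
                = Matrix.diagonal (fun i => (lam i : ℂ)) := by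
              rw [Matrix.diagonal_map (by simp)]
              congr 1
              funext i
              simp [Complex.conj_ofReal]
            rw [hdmap, ← Matrix.mul_assoc, hFdef]
            ext a b
            simp [Matrix.mul_diagonal, Matrix.neg_apply]
    -- charpoly and eigenvalue multiset symmetry
    have hMdecE : M = E * Matrix.diagonal (fun i => (lam i : ℂ)) * Eᴴ := by
      rw [← hME, Matrix.mul_assoc, hE2, Matrix.mul_one]
    have hMdecF : M = F * Matrix.diagonal (fun i => -(lam i : ℂ)) * Fᴴ := by
      rw [← hMF, Matrix.mul_assoc, hF2, Matrix.mul_one]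
    have hcp : (Matrix.diagonal (fun i => (lam i : ℂ))).charpoly
        = (Matrix.diagonal (fun i => -(lam i : ℂ))).charpoly := by
      rw [← charpoly_conj_aux E (Matrix.diagonal (fun i => (lam i : ℂ))) Eᴴ hE2,
        ← charpoly_conj_aux F (Matrix.diagonal (fun i => -(lam i : ℂ))) Fᴴ hF2,
        ← hMdecE, ← hMdecF]
    have hmult : Finset.univ.val.map (fun i => ((lam i : ℝ) : ℂ))
        = Finset.univ.val.map (fun i => -((lam i : ℝ) : ℂ)) := multiset_eq_aux _ _ hcp
    have hmultR : Finset.univ.val.map lam = Finset.univ.val.map (fun i => -lam i) := by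
      apply Multiset.map_injective Complex.ofReal_injective
      rw [Multiset.map_map, Multiset.map_map]
      have h1 : (Complex.ofReal ∘ lam) = fun i => ((lam i : ℝ) : ℂ) := rfl
      have h2 : (Complex.ofReal ∘ fun i => -lam i) = fun i => -((lam i : ℝ) : ℂ) := by
        funext i; simp
      rw [h1, h2]
      exact hmult
    -- counting positive eigenvalues
    have hcount : (Finset.univ.filter (fun i => 0 < lam i)).card
        = (Finset.univ.filter (fun i => lam i < 0)).card := by
      have h1 : (Finset.univ.filter (fun i => 0 < lam i)).card
          = Multiset.countP (fun x => 0 < x) (Finset.univ.val.map lam) := by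
        rw [Multiset.countP_map]
        rfl
      have h2 : (Finset.univ.filter (fun i => lam i < 0)).card
          = Multiset.countP (fun x => 0 < x) (Finset.univ.val.map (fun i => -lam i)) := by
        rw [Multiset.countP_map]
        have : (fun (i : Fin N ⊕ Fin N) => 0 < -lam i) = (fun i => lam i < 0) := by
          funext i; simp [neg_pos]
        simp only [this]
        rfl
      rw [h1, h2, hmultR]
    have hcount2 : (Finset.univ.filter (fun i => 0 < lam i)).card
        + (Finset.univ.filter (fun i => lam i < 0)).card = N + N := by
      have := Finset.card_filter_add_card_filter_not
        (s := (Finset.univ : Finset (Fin N ⊕ Fin N))) (p := fun i => 0 < lam i)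
      have heq : Finset.univ.filter (fun i => ¬ 0 < lam i)
          = Finset.univ.filter (fun i => lam i < 0) := by
        apply Finset.filter_congr
        intro i _
        constructor
        · intro h
          exact (not_lt.mp h).lt_of_ne (hlamne i)
        · intro h
          exact not_lt.mpr h.le
      rw [heq] at this
      rw [this]
      simp
    have hcard : Fintype.card {i : Fin N ⊕ Fin N // 0 < lam i} = N := by
      rw [Fintype.card_subtype]
      omega
    set e : Fin N ≃ {i : Fin N ⊕ Fin N // 0 < lam i} := (Fintype.equivFinOfCardEq hcard).symm
      with hedef
    set μ : Fin N → ℝ := fun k => lam (e k) with hμdef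
    have hμpos : ∀ k, 0 < μ k := fun k => (e k).2
    -- eigenvector columns
    set u : Fin N → (Fin N ⊕ Fin N) → ℂ := fun k a => E a (e k) with hudef
    set v : Fin N → (Fin N ⊕ Fin N) → ℂ := fun k a => (starRingEnd ℂ) (u k (Sum.swap a))
      with hvdef
    have hMu : ∀ k, M *ᵥ u k = (μ k : ℂ) • u k := by
      intro k
      funext a
      have h1 : (M *ᵥ u k) a = (M * E) a (e k) := by
        simp [Matrix.mulVec, Matrix.mul_apply, dotProduct, hudef]
      rw [h1, hME, Matrix.mul_diagonal]
      simp [hudef, hμdef, mul_comm]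
    have hMv : ∀ k, M *ᵥ v k = (-(μ k : ℂ)) • v k := by
      intro k
      funext a
      have h1 : (M *ᵥ v k) a
          = ∑ b, M a b * (starRingEnd ℂ) (u k (Sum.swap b)) := by
        simp [Matrix.mulVec, dotProduct, hvdef]
      rw [h1]
      have h2 : ∀ b, M a b * (starRingEnd ℂ) (u k (Sum.swap b))
          = -(starRingEnd ℂ) (M (Sum.swap a) (Sum.swap b) * u k (Sum.swap b)) := by
        intro b
        rw [hMc a b, _root_.map_mul]
        ring
      rw [Fintype.sum_congr _ _ h2]
      rw [Finset.sum_neg_distrib, ← _root_.map_sum]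
      have h3 : ∑ b, M (Sum.swap a) (Sum.swap b) * u k (Sum.swap b)
          = ∑ b, M (Sum.swap a) b * u k b := by
        have := Equiv.sum_comp (Equiv.sumComm (Fin N) (Fin N))
          (fun b => M (Sum.swap a) b * u k b)
        simpa using this
      rw [h3]
      have h4 : ∑ b, M (Sum.swap a) b * u k b = (M *ᵥ u k) (Sum.swap a) := by
        simp [Matrix.mulVec, dotProduct]
      rw [h4, hMu k]
      simp only [Pi.smul_apply, smul_eq_mul, _root_.map_mul, Complex.conj_ofReal, hvdef]
      ring
    have hkey : ∀ (x y : (Fin N ⊕ Fin N) → ℂ) (α β : ℝ), M *ᵥ x = (α : ℂ) • x →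
        M *ᵥ y = (β : ℂ) • y → α ≠ β → dotProduct (star x) y = 0 := by
      intro x y α β hx hy hab
      have h1 : dotProduct (star (M *ᵥ x)) y = dotProduct (star x) (M *ᵥ y) := by
        rw [Matrix.star_mulVec, ← Matrix.dotProduct_mulVec, hMH.eq]
      rw [hx, hy, star_smul, smul_dotProduct, dotProduct_smul] at h1
      have h2 : (star (α : ℂ)) = (α : ℂ) := by simp [Complex.star_def, Complex.conj_ofReal]
      rw [h2] at h1
      have h3 : ((α : ℂ) - (β : ℂ)) * dotProduct (star x) y = 0 := by
        rw [sub_mul]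
        rw [smul_eq_mul, smul_eq_mul] at h1
        rw [h1]
        ring
      rcases mul_eq_zero.mp h3 with h | h
      · exfalso
        apply hab
        have : ((α : ℂ)) = (β : ℂ) := by linear_combination h
        exact_mod_cast this
      · exact h
    have horthuu : ∀ j k, dotProduct (star (u j)) (u k) = if j = k then 1 else 0 := by
      intro j k
      have h1 : dotProduct (star (u j)) (u k) = (Eᴴ * E) (↑(e j)) (↑(e k)) := by
        simp [dotProduct, Matrix.mul_apply, Matrix.conjTranspose_apply, hudef]
      rw [h1, hE1, Matrix.one_apply]
      by_cases h : j = k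
      · subst h; simp
      · have : (↑(e j) : Fin N ⊕ Fin N) ≠ ↑(e k) := by
          intro hc
          exact h (e.injective (Subtype.ext hc))
        simp [h, this]
    have horthuv : ∀ j k, dotProduct (star (u j)) (v k) = 0 := by
      intro j k
      refine hkey _ _ (μ j) (-(μ k)) (hMu j) ?_ (by have := hμpos j; have := hμpos k; linarith)
      rw [hMv k]
      norm_num
    have horthvu : ∀ j k, dotProduct (star (v j)) (u k) = 0 := by
      intro j k
      refine hkey _ _ (-(μ j)) (μ k) ?_ (hMu k) (by have := hμpos j; have := hμpos k; linarith)
      rw [hMv j]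
      norm_num
    have horthvv : ∀ j k, dotProduct (star (v j)) (v k) = if j = k then 1 else 0 := by
      intro j k
      have h1 : dotProduct (star (v j)) (v k)
          = (starRingEnd ℂ) (dotProduct (star (u j)) (u k)) := by
        simp only [dotProduct, Pi.star_apply, _root_.map_sum, _root_.map_mul, hvdef]
        rw [← Equiv.sum_comp (Equiv.sumComm (Fin N) (Fin N))
          (fun a => star (v j a) * v k a)]
        apply Fintype.sum_congr
        intro a
        simp [hvdef, Complex.star_def, mul_comm]
      rw [h1, horthuu]
      by_cases h : j = k <;> simp [h]
    -- the unitary U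
    set U : Matrix (Fin N ⊕ Fin N) (Fin N ⊕ Fin N) ℂ :=
      Matrix.of (fun a b => Sum.elim (fun k => u k a) (fun k => v k a) b) with hUdef
    have hU1 : Uᴴ * U = 1 := by
      ext a b
      have hab : (Uᴴ * U) a b
          = dotProduct (star (fun c => U c a)) (fun c => U c b) := by
        simp [Matrix.mul_apply, Matrix.conjTranspose_apply, dotProduct]
      rcases a with j|j <;> rcases b with k|k
      · rw [hab]
        have := horthuu j k
        simp only [hUdef, Matrix.of_apply, Sum.elim_inl] at *
        rw [this]
        simp [Matrix.one_apply]
      · rw [hab]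
        have := horthuv j k
        simp only [hUdef, Matrix.of_apply, Sum.elim_inl, Sum.elim_inr] at *
        rw [this]
        simp [Matrix.one_apply]
      · rw [hab]
        have := horthvu j k
        simp only [hUdef, Matrix.of_apply, Sum.elim_inl, Sum.elim_inr] at *
        rw [this]
        simp [Matrix.one_apply]
      · rw [hab]
        have := horthvv j k
        simp only [hUdef, Matrix.of_apply, Sum.elim_inr] at *
        rw [this]
        simp [Matrix.one_apply]
    have hU2 : U * Uᴴ = 1 := mul_eq_one_comm.mp hU1
    set dd : Matrix (Fin N ⊕ Fin N) (Fin N ⊕ Fin N) ℂ :=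
      Matrix.diagonal (Sum.elim (fun k => (μ k : ℂ)) (fun k => -(μ k : ℂ))) with hdddef
    have hMU : M * U = U * dd := by
      ext a b
      rcases b with k|k
      · have h := congrFun (hMu k) a
        simp only [Matrix.mulVec, dotProduct, Pi.smul_apply, smul_eq_mul] at h
        rw [Matrix.mul_apply, Matrix.mul_diagonal]
        simp only [hUdef, Matrix.of_apply, Sum.elim_inl, hdddef, Sum.elim_inl]
        rw [h]
        ring
      · have h := congrFun (hMv k) a
        simp only [Matrix.mulVec, dotProduct, Pi.smul_apply, smul_eq_mul] at h
        rw [Matrix.mul_apply, Matrix.mul_diagonal]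
        simp only [hUdef, Matrix.of_apply, Sum.elim_inr, hdddef, Sum.elim_inr]
        rw [h]
        ring
    -- the scaling matrix S
    set sq : Fin N → ℂ := fun k => ((Real.sqrt (μ k) : ℝ) : ℂ) with hsqdef
    have hsqne : ∀ k, sq k ≠ 0 := by
      intro k
      simp only [hsqdef]
      exact Complex.ofReal_ne_zero.mpr (Real.sqrt_pos.mpr (hμpos k)).ne'
    have hsq2 : ∀ k, sq k * sq k = (μ k : ℂ) := by
      intro k
      simp only [hsqdef]
      rw [← Complex.ofReal_mul, Real.mul_self_sqrt (hμpos k).le]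
    set S : Matrix (Fin N ⊕ Fin N) (Fin N ⊕ Fin N) ℂ :=
      Matrix.diagonal (Sum.elim sq sq) with hSdef
    set S' : Matrix (Fin N ⊕ Fin N) (Fin N ⊕ Fin N) ℂ :=
      Matrix.diagonal (Sum.elim (fun k => (sq k)⁻¹) (fun k => (sq k)⁻¹)) with hS'def
    have hSS' : S * S' = 1 := by
      rw [hSdef, hS'def, Matrix.diagonal_mul_diagonal, ← Matrix.diagonal_one]
      refine congrArg Matrix.diagonal (funext fun i => ?_)
      rcases i with k|k <;>
        simp [mul_inv_cancel₀ (hsqne _)]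
    have hS'S : S' * S = 1 := by
      rw [hSdef, hS'def, Matrix.diagonal_mul_diagonal, ← Matrix.diagonal_one]
      refine congrArg Matrix.diagonal (funext fun i => ?_)
      rcases i with k|k <;>
        simp [inv_mul_cancel₀ (hsqne _)]
    have hSH : Sᴴ = S := by
      rw [hSdef, Matrix.diagonal_conjTranspose]
      refine congrArg Matrix.diagonal (funext fun i => ?_)
      rcases i with k|k <;>
        simp [hsqdef, Pi.star_apply, Complex.star_def, Complex.conj_ofReal]
    -- the transformation T
    set T : Matrix (Fin N ⊕ Fin N) (Fin N ⊕ Fin N) ℂ := W⁻¹ * U * S with hTdef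
    have cWWi : ∀ X : Matrix (Fin N ⊕ Fin N) (Fin N ⊕ Fin N) ℂ, W * (W⁻¹ * X) = X := by
      intro X; rw [← Matrix.mul_assoc, hWi1, Matrix.one_mul]
    have cU'U : ∀ X : Matrix (Fin N ⊕ Fin N) (Fin N ⊕ Fin N) ℂ, Uᴴ * (U * X) = X := by
      intro X; rw [← Matrix.mul_assoc, hU1, Matrix.one_mul]
    have hTinv : T⁻¹ = S' * Uᴴ * W := by
      apply Matrix.inv_eq_right_inv
      calc (W⁻¹ * U * S) * (S' * Uᴴ * W)
          = W⁻¹ * U * (S * S') * Uᴴ * W := by noncomm_ring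
        _ = W⁻¹ * (U * Uᴴ) * W := by rw [hSS', Matrix.mul_one]; noncomm_ring
        _ = W⁻¹ * W := by rw [hU2, Matrix.mul_one]
        _ = 1 := hWi2
    -- Tᴴ R T = Sig
    set dd' : Matrix (Fin N ⊕ Fin N) (Fin N ⊕ Fin N) ℂ :=
      Matrix.diagonal (Sum.elim (fun k => (μ k : ℂ)⁻¹) (fun k => (-(μ k : ℂ))⁻¹)) with hdd'def
    have hμne : ∀ k, (μ k : ℂ) ≠ 0 := fun k => Complex.ofReal_ne_zero.mpr (hμpos k).ne'
    have hdd'dd : dd' * dd = 1 := by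
      rw [hdd'def, hdddef, Matrix.diagonal_mul_diagonal, ← Matrix.diagonal_one]
      refine congrArg Matrix.diagonal (funext fun i => ?_)
      rcases i with k|k <;> simp only [Pi.mul_apply, Sum.elim_inl, Sum.elim_inr]
      · exact inv_mul_cancel₀ (hμne k)
      · exact inv_mul_cancel₀ (neg_ne_zero.mpr (hμne k))
    have hddeq : dd = Uᴴ * (M * U) := by
      rw [hMU, ← Matrix.mul_assoc, hU1, Matrix.one_mul]
    have hMMi : M * ((W⁻¹ * R * W⁻¹) * U) = U := by
      calc M * ((W⁻¹ * R * W⁻¹) * U)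
          = W * R⁻¹ * ((W * W⁻¹) * (R * (W⁻¹ * U))) := by rw [hMdef]; noncomm_ring
        _ = W * ((R⁻¹ * R) * (W⁻¹ * U)) := by rw [hWi1, Matrix.one_mul]; noncomm_ring
        _ = (W * W⁻¹) * U := by rw [hRi2, Matrix.one_mul]; noncomm_ring
        _ = U := by rw [hWi1, Matrix.one_mul]
    have hX : dd * (Uᴴ * ((W⁻¹ * R * W⁻¹) * U)) = 1 := by
      rw [hddeq]
      calc (Uᴴ * (M * U)) * (Uᴴ * ((W⁻¹ * R * W⁻¹) * U))
          = Uᴴ * (M * ((U * Uᴴ) * ((W⁻¹ * R * W⁻¹) * U))) := by noncomm_ring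
        _ = Uᴴ * (M * ((W⁻¹ * R * W⁻¹) * U)) := by rw [hU2, Matrix.one_mul]
        _ = Uᴴ * U := by rw [hMMi]
        _ = 1 := hU1
    have hUMinvU : Uᴴ * ((W⁻¹ * R * W⁻¹) * U) = dd' := by
      have h := congrArg (fun Z => dd' * Z) hX
      rw [← Matrix.mul_assoc, hdd'dd, Matrix.one_mul, Matrix.mul_one] at h
      exact h
    have hSigd : Sig = Matrix.diagonal (Sum.elim (fun _ : Fin N => (1:ℂ)) (fun _ => -1)) := by
      rw [hSig]
      ext i j
      rcases i with i|i <;> rcases j with j|j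
      · simp [Matrix.diagonal_apply, Matrix.one_apply]
      · simp
      · simp
      · by_cases h : i = j <;> simp [Matrix.diagonal_apply, Matrix.one_apply, h]
    have hTH : Tᴴ = S * (Uᴴ * W⁻¹) := by
      rw [hTdef, Matrix.conjTranspose_mul, Matrix.conjTranspose_mul, hSH, hWiH]
    have hTRT : Tᴴ * R * T = Sig := by
      calc Tᴴ * R * T = (S * (Uᴴ * W⁻¹)) * R * (W⁻¹ * U * S) := by rw [hTH, hTdef]
        _ = S * (Uᴴ * ((W⁻¹ * R * W⁻¹) * U)) * S := by noncomm_ring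
        _ = S * dd' * S := by rw [hUMinvU]
        _ = Sig := by
            rw [hSigd, hSdef, hdd'def, Matrix.diagonal_mul_diagonal,
              Matrix.diagonal_mul_diagonal]
            refine congrArg Matrix.diagonal (funext fun i => ?_)
            rcases i with k|k <;> simp only [Pi.mul_apply, Sum.elim_inl, Sum.elim_inr]
            · calc sq k * (μ k : ℂ)⁻¹ * sq k = (sq k * sq k) * (μ k : ℂ)⁻¹ := by ring
                _ = 1 := by rw [hsq2 k]; exact mul_inv_cancel₀ (hμne k)
            · rw [inv_neg]
              calc sq k * (-(μ k : ℂ)⁻¹) * sq k = -((sq k * sq k) * (μ k : ℂ)⁻¹) := by ring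
                _ = -1 := by rw [hsq2 k, mul_inv_cancel₀ (hμne k)]
    -- T = Γ T̄ Γ
    have hCU : Γ * U.map (starRingEnd ℂ) * Γ = U := by
      ext a b
      rw [hGr, hGl, Matrix.map_apply]
      rcases b with k|k
      · simp [hUdef, hvdef, Sum.swap_swap, Complex.conj_conj]
      · simp [hUdef, hvdef]
    have hCS : Γ * S.map (starRingEnd ℂ) * Γ = S := by
      have hSmap : S.map (starRingEnd ℂ) = S := by
        rw [hSdef, Matrix.diagonal_map (by simp)]
        refine congrArg Matrix.diagonal (funext fun i => ?_)
        rcases i with k|k <;> simp [hsqdef, Complex.conj_ofReal]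
      rw [hSmap]
      ext a b
      rw [hGr, hGl]
      rcases a with i|i <;> rcases b with j|j <;>
        simp [hSdef, Matrix.diagonal_apply]
    have hCT : T = Γ * T.map (starRingEnd ℂ) * Γ := by
      conv_lhs => rw [hTdef]
      rw [hTdef]
      calc W⁻¹ * U * S
          = (Γ * (W⁻¹).map (starRingEnd ℂ) * Γ) * (Γ * U.map (starRingEnd ℂ) * Γ)
            * (Γ * S.map (starRingEnd ℂ) * Γ) := by rw [hCWi, hCU, hCS]
        _ = Γ * ((W⁻¹ * U * S).map (starRingEnd ℂ)) * Γ := by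
            rw [hsand, hsand, ← Matrix.map_mul, ← Matrix.map_mul]
    -- T⁻¹ D T = dd
    have hUdd : ∀ X : Matrix (Fin N ⊕ Fin N) (Fin N ⊕ Fin N) ℂ,
        W * (R⁻¹ * (W * (U * X))) = U * (dd * X) := by
      intro X
      calc W * (R⁻¹ * (W * (U * X))) = (M * U) * X := by rw [hMdef]; noncomm_ring
        _ = (U * dd) * X := by rw [hMU]
        _ = U * (dd * X) := by noncomm_ring
    have hTDT : T⁻¹ * D * T = dd := by
      rw [hTinv, hD, hTdef]
      calc (S' * Uᴴ * W) * (R⁻¹ * Ω) * (W⁻¹ * U * S)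
          = S' * (Uᴴ * (W * (R⁻¹ * ((W * W) * (W⁻¹ * (U * S)))))) := by
            rw [← hWW]; noncomm_ring
        _ = S' * (Uᴴ * (W * (R⁻¹ * (W * (U * S))))) := by
            have h5 : (W * W) * (W⁻¹ * (U * S)) = W * (U * S) := by
              rw [Matrix.mul_assoc, cWWi]
            rw [h5]
        _ = S' * (Uᴴ * (U * (dd * S))) := by rw [hUdd S]
        _ = S' * (dd * S) := by rw [cU'U]
        _ = dd := by
            rw [hS'def, hdddef, hSdef, Matrix.diagonal_mul_diagonal,
              Matrix.diagonal_mul_diagonal]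
            refine congrArg Matrix.diagonal (funext fun i => ?_)
            rcases i with k|k <;> simp only [Pi.mul_apply, Sum.elim_inl, Sum.elim_inr]
            · calc (sq k)⁻¹ * ((μ k : ℂ) * sq k) = (μ k : ℂ) * ((sq k)⁻¹ * sq k) := by ring
                _ = (μ k : ℂ) := by rw [inv_mul_cancel₀ (hsqne k), mul_one]
            · calc (sq k)⁻¹ * (-(μ k : ℂ) * sq k) = -(μ k : ℂ) * ((sq k)⁻¹ * sq k) := by ring
                _ = -(μ k : ℂ) := by rw [inv_mul_cancel₀ (hsqne k), mul_one]
    exact ⟨T, μ, hμpos, hTRT, hCT, hTDT⟩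

  · rintro ⟨T, μ, hμ, h1, h2, h3⟩
    set dd : Matrix (Fin N ⊕ Fin N) (Fin N ⊕ Fin N) ℂ :=
      Matrix.diagonal (Sum.elim (fun i => (μ i : ℂ)) fun i => -(μ i : ℂ)) with hdd
    have hSigd : Sig = Matrix.diagonal (Sum.elim (fun _ : Fin N => (1:ℂ)) (fun _ => -1)) := by
      rw [hSig]
      ext i j
      rcases i with i|i <;> rcases j with j|j
      · simp [Matrix.diagonal_apply, Matrix.one_apply]
      · simp
      · simp
      · by_cases h : i = j <;> simp [Matrix.diagonal_apply, Matrix.one_apply, h]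
    have hSig2 : Sig * Sig = 1 := by
      rw [hSigd, Matrix.diagonal_mul_diagonal, ← Matrix.diagonal_one]
      refine congrArg Matrix.diagonal (funext fun i => ?_)
      cases i <;> simp
    have hSigdet : IsUnit Sig.det := by
      apply IsUnit.of_mul_eq_one Sig.det
      rw [← det_mul, hSig2, det_one]
    have hTdet : IsUnit T.det := by
      rw [← h1, det_mul, det_mul] at hSigdet
      exact isUnit_of_mul_isUnit_right hSigdet
    have hT1 : T * T⁻¹ = 1 := mul_nonsing_inv T hTdet
    have hT2 : T⁻¹ * T = 1 := nonsing_inv_mul T hTdet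
    have hTH : IsUnit Tᴴ.det := by
      rw [det_conjTranspose]
      exact hTdet.star
    have hTH2 : Tᴴ⁻¹ * Tᴴ = 1 := nonsing_inv_mul _ hTH
    have hR1 : R * R⁻¹ = 1 := mul_nonsing_inv R hRunit
    have hDdec : D = T * dd * T⁻¹ := by
      rw [← h3]
      simp only [Matrix.mul_assoc, hT1, Matrix.mul_one]
      rw [← Matrix.mul_assoc T T⁻¹, hT1, Matrix.one_mul]
    have hΩD : Ω = R * D := by
      rw [hD, ← Matrix.mul_assoc, hR1, Matrix.one_mul]
    have hRT : R * T = Tᴴ⁻¹ * Sig := by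
      rw [← h1]
      rw [← Matrix.mul_assoc, ← Matrix.mul_assoc, hTH2, Matrix.one_mul]
    have hΩeq : Ω = (T⁻¹)ᴴ * (Sig * dd) * T⁻¹ := by
      rw [hΩD, hDdec, ← Matrix.mul_assoc, ← Matrix.mul_assoc, hRT, conjTranspose_nonsing_inv]
      simp only [Matrix.mul_assoc]
    have hSigdd : Sig * dd
        = Matrix.diagonal (Sum.elim (fun i => (μ i : ℂ)) (fun i => (μ i : ℂ))) := by
      rw [hSigd, hdd, Matrix.diagonal_mul_diagonal]
      refine congrArg Matrix.diagonal (funext fun i => ?_)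
      cases i <;> simp
    have hpd : (Sig * dd).PosDef := by
      rw [hSigdd]
      refine Matrix.PosDef.diagonal fun i => ?_
      cases i <;> · simp only [Sum.elim_inl, Sum.elim_inr]
                    exact Complex.zero_lt_real.mpr (hμ _)
    have hTinvdet : IsUnit (T⁻¹).det := T.isUnit_nonsing_inv_det hTdet
    rw [hΩeq]
    exact posdef_conj_aux hpd (T⁻¹) hTinvdet
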